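/- Let H be a Hermitian d×d complex matrix with spectral decomposition H = ∑_{k=1}^{d'} E_k Π_k (E_1 < … < E_{d'} the distinct eigenvalues, Π_k the orthogonal projections onto the corresponding eigenspaces), and let ρ(0) be any d×d complex matrix. Then the infinite time average of the unitarily evolved matrix exists and equals the dephased initial matrix: lim_{T→∞} (1/T)∫₀^T e^{−iHt} ρ(0) e^{iHt} dt = ∑_{k=1}^{d'} Π_k ρ(0) Π_k. -/

import Mathlib

open Matrix Complex Filter

section TimeAvgAux

open Nat intervalIntegral

attribute [local instance] Matrix.linftyOpNormedRing Matrix.linftyOpNormedAlgebra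

variable {d d' : ℕ}
  {H : Matrix (Fin d) (Fin d) ℂ}
  {E : Fin d' → ℝ}
  {P : Fin d' → Matrix (Fin d) (Fin d) ℂ}

section specAux
variable (hPorth : ∀ k l, P k * P l = if k = l then P k else 0)
  (hHspec : H = ∑ k, (E k : ℂ) • P k)
include hPorth hHspec

lemma timeAvg_H_mul_P (l : Fin d') : H * P l = (E l : ℂ) • P l := by
  rw [hHspec, Finset.sum_mul]
  simp [smul_mul_assoc, hPorth, Finset.sum_ite_eq']

lemma timeAvg_P_mul_H (k : Fin d') : P k * H = (E k : ℂ) • P k := by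
  rw [hHspec, Finset.mul_sum]
  simp [mul_smul_comm, hPorth, Finset.sum_ite_eq]

lemma timeAvg_pow_mul_P (c : ℂ) (l : Fin d') (n : ℕ) :
    (c • H) ^ n * P l = (c * E l) ^ n • P l := by
  induction n with
  | zero => simp
  | succ n ih =>
    rw [pow_succ, mul_assoc, smul_mul_assoc, timeAvg_H_mul_P hPorth hHspec,
      smul_smul, mul_smul_comm, ih, smul_smul, pow_succ]
    congr 1
    ring

lemma timeAvg_P_mul_pow (c : ℂ) (k : Fin d') (n : ℕ) :
    P k * (c • H) ^ n = (c * E k) ^ n • P k := by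
  induction n with
  | zero => simp
  | succ n ih =>
    rw [pow_succ, ← mul_assoc, ih, smul_mul_assoc, mul_smul_comm,
      timeAvg_P_mul_H hPorth hHspec, smul_smul, smul_smul, pow_succ]
    ring_nf

lemma timeAvg_exp_mul_P (c : ℂ) (l : Fin d') :
    NormedSpace.exp (c • H) * P l = Complex.exp (c * E l) • P l := by
  simp only [NormedSpace.exp_eq_tsum ℂ]
  erw [← Summable.tsum_mul_right _ (NormedSpace.expSeries_summable' (𝕂 := ℂ) (c • H))]
  have h1 : ∀ n : ℕ, ((n ! : ℂ)⁻¹ • (c • H) ^ n) * P l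
      = ((n ! : ℂ)⁻¹ * (c * E l) ^ n) • P l := fun n => by
    rw [smul_mul_assoc, timeAvg_pow_mul_P hPorth hHspec, smul_smul]
  erw [tsum_congr h1, Summable.tsum_smul_const ?_]
  · congr 1
    rw [Complex.exp_eq_exp_ℂ, NormedSpace.exp_eq_tsum ℂ]
    simp [smul_eq_mul]
  · exact (NormedSpace.expSeries_summable' (𝕂 := ℂ) (c * E l)).congr
      (fun n => by simp [smul_eq_mul])

lemma timeAvg_P_mul_exp (c : ℂ) (k : Fin d') :
    P k * NormedSpace.exp (c • H) = Complex.exp (c * E k) • P k := by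
  simp only [NormedSpace.exp_eq_tsum ℂ]
  erw [← Summable.tsum_mul_left _ (NormedSpace.expSeries_summable' (𝕂 := ℂ) (c • H))]
  have h1 : ∀ n : ℕ, P k * ((n ! : ℂ)⁻¹ • (c • H) ^ n)
      = ((n ! : ℂ)⁻¹ * (c * E k) ^ n) • P k := fun n => by
    rw [mul_smul_comm, timeAvg_P_mul_pow hPorth hHspec, smul_smul]
  erw [tsum_congr h1, Summable.tsum_smul_const ?_]
  · congr 1
    rw [Complex.exp_eq_exp_ℂ, NormedSpace.exp_eq_tsum ℂ]
    simp [smul_eq_mul]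
  · exact (NormedSpace.expSeries_summable' (𝕂 := ℂ) (c * E k)).congr
      (fun n => by simp [smul_eq_mul])

end specAux

lemma timeAvg_avg_const (m : ℂ) :
    Tendsto (fun T : ℝ => (1/(T:ℂ)) * ((∫ t in (0:ℝ)..T, Complex.exp ((0:ℂ) * t)) * m))
      atTop (nhds m) := by
  have h : ∀ᶠ T : ℝ in atTop,
      m = (1/(T:ℂ)) * ((∫ t in (0:ℝ)..T, Complex.exp ((0:ℂ) * t)) * m) := by
    filter_upwards [eventually_gt_atTop (0:ℝ)] with T hT
    have hT' : (T:ℂ) ≠ 0 := by exact_mod_cast ne_of_gt hT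
    simp only [zero_mul, Complex.exp_zero, intervalIntegral.integral_const, sub_zero,
      Complex.real_smul, ofReal_one, mul_one]
    field_simp
  exact Tendsto.congr' h tendsto_const_nhds

lemma timeAvg_avg_osc {c : ℂ} (hc : c ≠ 0) (hre : c.re = 0) (m : ℂ) :
    Tendsto (fun T : ℝ => (1/(T:ℂ)) * ((∫ t in (0:ℝ)..T, Complex.exp (c * t)) * m))
      atTop (nhds 0) := by
  have hg : Tendsto (fun T : ℝ => T⁻¹ * (2 / ‖c‖ * ‖m‖)) atTop (nhds 0) := by
    simpa using (tendsto_inv_atTop_zero (𝕜 := ℝ)).mul_const (2 / ‖c‖ * ‖m‖)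
  refine squeeze_zero_norm' ?_ hg
  filter_upwards [eventually_gt_atTop (0:ℝ)] with T hT
  rw [integral_exp_mul_complex hc]
  have hnormexp : ∀ s : ℝ, ‖Complex.exp (c * s)‖ = 1 := by
    intro s
    rw [Complex.norm_exp]
    have h0 : (c * (s:ℂ)).re = 0 := by simp [Complex.mul_re, hre]
    rw [h0, Real.exp_zero]
  have hb : ‖Complex.exp (c * (T:ℝ)) - Complex.exp (c * ((0:ℝ):ℂ))‖ ≤ 2 := by
    calc ‖Complex.exp (c * (T:ℝ)) - Complex.exp (c * ((0:ℝ):ℂ))‖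
        ≤ ‖Complex.exp (c * (T:ℝ))‖ + ‖Complex.exp (c * ((0:ℝ):ℂ))‖ := norm_sub_le _ _
      _ = 2 := by rw [hnormexp T, hnormexp 0]; norm_num
  have h1 : ‖(1/(T:ℂ))‖ = T⁻¹ := by
    rw [norm_div, norm_one, Complex.norm_real, Real.norm_eq_abs, abs_of_pos hT, one_div]
  calc ‖(1/(T:ℂ)) * ((Complex.exp (c * (T:ℝ)) - Complex.exp (c * ((0:ℝ):ℂ))) / c * m)‖
      = ‖(1/(T:ℂ))‖ * (‖Complex.exp (c * (T:ℝ)) - Complex.exp (c * ((0:ℝ):ℂ))‖ / ‖c‖ * ‖m‖) := by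
        simp [norm_mul, norm_div]
    _ ≤ T⁻¹ * (2 / ‖c‖ * ‖m‖) := by
        rw [h1]
        gcongr

end TimeAvgAux

/-- The unitarily time-evolved matrix `e^{-iHt} ρ₀ e^{iHt}`. -/
noncomputable def timeEvol {d : ℕ} (H ρ0 : Matrix (Fin d) (Fin d) ℂ) (t : ℝ) :
    Matrix (Fin d) (Fin d) ℂ :=
  NormedSpace.exp ((-(Complex.I * t)) • H) * ρ0 * NormedSpace.exp ((Complex.I * t) • H)

/-- **Infinite time average equals the dephased state.**
Let `H` be a Hermitian `d×d` complex matrix with spectral decomposition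
`H = ∑ k, E k • Π k` (with `E` strictly increasing and `Π k` the mutually orthogonal
Hermitian spectral projections summing to `1`), and let `ρ0` be any `d×d` matrix.
Then (entrywise, equivalently in any matrix norm) the infinite time average of
`e^{-iHt} ρ0 e^{iHt}` exists and equals `∑ k, Π k * ρ0 * Π k`. -/
theorem time_average_eq_dephased {d d' : ℕ}
    (H : Matrix (Fin d) (Fin d) ℂ) (hH : H.IsHermitian)
    (E : Fin d' → ℝ) (hE : StrictMono E)
    (P : Fin d' → Matrix (Fin d) (Fin d) ℂ)
    (hPherm : ∀ k, (P k).IsHermitian)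
    (hPorth : ∀ k l, P k * P l = if k = l then P k else 0)
    (hPsum : ∑ k, P k = 1)
    (hHspec : H = ∑ k, (E k : ℂ) • P k)
    (ρ0 : Matrix (Fin d) (Fin d) ℂ) :
    ∀ i j : Fin d,
      Tendsto (fun T : ℝ => (1 / (T : ℂ)) * ∫ t in (0:ℝ)..T, timeEvol H ρ0 t i j)
        atTop (nhds ((∑ k, P k * ρ0 * P k) i j)) := by
  intro i j
  -- frequencies and coefficients
  set c : Fin d' → Fin d' → ℂ := fun k l => Complex.I * ((E l : ℂ) - E k) with hc
  set m : Fin d' → Fin d' → ℂ := fun k l => (P k * ρ0 * P l) i j with hm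
  -- decomposition of the time-evolved matrix
  have hTE : ∀ t : ℝ, timeEvol H ρ0 t
      = ∑ k, ∑ l, Complex.exp (c k l * t) • (P k * ρ0 * P l) := by
    intro t
    have hA : NormedSpace.exp ((-(Complex.I * t)) • H)
        = ∑ k, Complex.exp ((-(Complex.I * t)) * E k) • P k := by
      calc NormedSpace.exp ((-(Complex.I * t)) • H)
          = (∑ k, P k) * NormedSpace.exp ((-(Complex.I * t)) • H) := by rw [hPsum, one_mul]
        _ = ∑ k, P k * NormedSpace.exp ((-(Complex.I * t)) • H) := Finset.sum_mul _ _ _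
        _ = ∑ k, Complex.exp ((-(Complex.I * t)) * E k) • P k :=
            Finset.sum_congr rfl fun k _ => timeAvg_P_mul_exp hPorth hHspec _ k
    have hB : NormedSpace.exp ((Complex.I * t) • H)
        = ∑ l, Complex.exp ((Complex.I * t) * E l) • P l := by
      calc NormedSpace.exp ((Complex.I * t) • H)
          = NormedSpace.exp ((Complex.I * t) • H) * ∑ l, P l := by rw [hPsum, mul_one]
        _ = ∑ l, NormedSpace.exp ((Complex.I * t) • H) * P l := Finset.mul_sum _ _ _
        _ = ∑ l, Complex.exp ((Complex.I * t) * E l) • P l :=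
            Finset.sum_congr rfl fun l _ => timeAvg_exp_mul_P hPorth hHspec _ l
    rw [timeEvol, hA, hB]
    rw [Finset.sum_mul, Finset.sum_mul]
    refine Finset.sum_congr rfl fun k _ => ?_
    rw [Finset.mul_sum]
    refine Finset.sum_congr rfl fun l _ => ?_
    rw [smul_mul_assoc, smul_mul_assoc, mul_smul_comm, smul_smul, ← Complex.exp_add]
    congr 2
    push_cast [hc]
    ring
  -- entrywise decomposition
  have hEntry : ∀ t : ℝ, timeEvol H ρ0 t i j
      = ∑ k, ∑ l, Complex.exp (c k l * t) * m k l := by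
    intro t
    rw [hTE t]
    simp [hm, Matrix.sum_apply, Matrix.smul_apply, smul_eq_mul]
  -- integrability of each term
  have hcont : ∀ (a : ℂ) (b : ℂ), Continuous (fun t : ℝ => Complex.exp (a * t) * b) :=
    fun a b => (Complex.continuous_exp.comp (continuous_const.mul continuous_ofReal)).mul
      continuous_const
  have hInt : ∀ (a : ℂ) (b : ℂ) (T : ℝ),
      IntervalIntegrable (fun t : ℝ => Complex.exp (a * t) * b) MeasureTheory.volume 0 T :=
    fun a b T => (hcont a b).intervalIntegrable _ _
  -- rewrite the average as a finite sum of averages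
  have hfun : ∀ T : ℝ, (1 / (T : ℂ)) * ∫ t in (0:ℝ)..T, timeEvol H ρ0 t i j
      = ∑ k, ∑ l, (1 / (T : ℂ)) *
          ((∫ t in (0:ℝ)..T, Complex.exp (c k l * t)) * m k l) := by
    intro T
    have h1 : (∫ t in (0:ℝ)..T, timeEvol H ρ0 t i j)
        = ∑ k, ∑ l, ∫ t in (0:ℝ)..T, Complex.exp (c k l * t) * m k l :=
      calc (∫ t in (0:ℝ)..T, timeEvol H ρ0 t i j)
          = ∫ t in (0:ℝ)..T, ∑ k, ∑ l, Complex.exp (c k l * t) * m k l :=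
            intervalIntegral.integral_congr (fun t _ => hEntry t)
        _ = ∑ k, ∫ t in (0:ℝ)..T, ∑ l, Complex.exp (c k l * t) * m k l :=
            intervalIntegral.integral_finset_sum
              (fun k _ => ((continuous_finset_sum _ fun l _ => hcont (c k l)
                (m k l)).intervalIntegrable _ _))
        _ = ∑ k, ∑ l, ∫ t in (0:ℝ)..T, Complex.exp (c k l * t) * m k l :=
            Finset.sum_congr rfl fun k _ =>
              intervalIntegral.integral_finset_sum (fun l _ => hInt _ _ _)
    rw [h1, Finset.mul_sum]
    refine Finset.sum_congr rfl fun k _ => ?_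
    rw [Finset.mul_sum]
    refine Finset.sum_congr rfl fun l _ => ?_
    rw [intervalIntegral.integral_mul_const]
  -- the limit value as a double sum
  have hval : (∑ k, P k * ρ0 * P k) i j
      = ∑ k, ∑ l, (if k = l then m k l else 0) := by
    simp [hm, Matrix.sum_apply, Finset.sum_ite_eq']
  rw [hval]
  refine Tendsto.congr (fun T => (hfun T).symm) ?_
  refine tendsto_finset_sum _ fun k _ => tendsto_finset_sum _ fun l _ => ?_
  by_cases hkl : k = l
  · subst hkl
    have hc0 : c k k = 0 := by simp [hc]
    rw [if_pos rfl, hc0]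
    exact timeAvg_avg_const (m k k)
  · have hcne : c k l ≠ 0 := by
      simp only [hc]
      intro h
      rcases mul_eq_zero.mp h with h | h
      · exact Complex.I_ne_zero h
      · have h2 : (E l : ℂ) = E k := by linear_combination h
        have h3 : E l = E k := by exact_mod_cast h2
        exact hkl ((hE.injective h3).symm)
    have hrec : (c k l).re = 0 := by
      simp [hc, Complex.mul_re]
    rw [if_neg hkl]
    exact timeAvg_avg_osc hcne hrec (m k l)
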